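/- Let 0 < q < 1 and for each l ∈ ℕ set m_l = [2l+1]_q. Then for all n, k ∈ ℕ with n + k = l, 1 ≤ m_n·m_k/m_l ≤ 1/(1-q²)². Consequently, defining α_l = (∑_{n+k=l} m_n m_k / m_l)^{-1/2}, one has (1-q²)·(l+1)^{-1/2} ≤ α_l ≤ (l+1)^{-1/2} for all l. -/
import Mathlib


/-- The `q`-number `[a]_q = (qᵃ - q⁻ᵃ)/(q - q⁻¹)`. -/
noncomputable def qnum (q : ℝ) (a : ℕ) : ℝ := (q ^ a - q⁻¹ ^ a) / (q - q⁻¹)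

lemma qnum_eq (q : ℝ) (hq : 0 < q) (hq1 : q < 1) (a : ℕ) :
    qnum q (a + 1) = (1 - q ^ (2 * a + 2)) / (q ^ a * (1 - q ^ 2)) := by
  have hq0 : q ≠ 0 := hq.ne'
  have hden : q - q⁻¹ ≠ 0 := by
    have h1 : 1 < q⁻¹ := (one_lt_inv₀ hq).mpr hq1
    intro h; nlinarith
  have h2 : (1 : ℝ) - q ^ 2 ≠ 0 := by nlinarith [pow_lt_one₀ hq.le hq1 (two_ne_zero)]
  unfold qnum
  rw [inv_pow]
  rw [div_eq_div_iff hden (by positivity)]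
  field_simp
  ring

lemma one_sub_pow_pos (q : ℝ) (hq : 0 < q) (hq1 : q < 1) (m : ℕ) (hm : m ≠ 0) :
    (0 : ℝ) < 1 - q ^ m := by
  have := pow_lt_one₀ hq.le hq1 hm; linarith

lemma qnum_ratio (q : ℝ) (hq : 0 < q) (hq1 : q < 1) (n k : ℕ) :
    qnum q (2 * n + 1) * qnum q (2 * k + 1) / qnum q (2 * (n + k) + 1) =
    (1 - q ^ (4 * n + 2)) * (1 - q ^ (4 * k + 2)) /
      ((1 - q ^ 2) * (1 - q ^ (4 * (n + k) + 2))) := by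
  have hq0 : q ≠ 0 := hq.ne'
  have h2 : (0 : ℝ) < 1 - q ^ 2 := one_sub_pow_pos q hq hq1 2 two_ne_zero
  have hA : (0 : ℝ) < 1 - q ^ (2 * (2*n) + 2) := one_sub_pow_pos q hq hq1 _ (by omega)
  have hB : (0 : ℝ) < 1 - q ^ (2 * (2*k) + 2) := one_sub_pow_pos q hq hq1 _ (by omega)
  have hC : (0 : ℝ) < 1 - q ^ (2 * (2*(n+k)) + 2) := one_sub_pow_pos q hq hq1 _ (by omega)
  have hC' : (0 : ℝ) < 1 - q ^ (4 * (n+k) + 2) := one_sub_pow_pos q hq hq1 _ (by omega)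
  rw [qnum_eq q hq hq1 (2*n), qnum_eq q hq hq1 (2*k), qnum_eq q hq hq1 (2*(n+k))]
  rw [div_mul_div_comm, div_div_div_eq]
  rw [div_eq_div_iff
    (mul_pos (mul_pos (mul_pos (pow_pos hq _) h2) (mul_pos (pow_pos hq _) h2)) hC).ne'
    (mul_pos h2 hC').ne']
  have e1 : ∀ m : ℕ, q ^ (2 * m + 2) = (q ^ m) ^ 2 * q ^ 2 := fun m => by
    rw [pow_add, pow_mul']
  have e2 : ∀ m : ℕ, q ^ (4 * m + 2) = (q ^ m) ^ 4 * q ^ 2 := fun m => by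
    rw [pow_add, pow_mul']
  have e0 : ∀ m : ℕ, q ^ (2 * m) = (q ^ m) ^ 2 := fun m => pow_mul' q 2 m
  have e4 : q ^ (n + k) = q ^ n * q ^ k := pow_add q n k
  rw [e1, e1, e1, e2, e2, e2, e0, e0, e0, e4]
  ring

lemma ratio_bounds (q : ℝ) (hq : 0 < q) (hq1 : q < 1) (n k : ℕ) :
    1 ≤ qnum q (2 * n + 1) * qnum q (2 * k + 1) / qnum q (2 * (n + k) + 1) ∧
    qnum q (2 * n + 1) * qnum q (2 * k + 1) / qnum q (2 * (n + k) + 1) ≤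
      1 / (1 - q ^ 2) ^ 2 := by
  have h2 : (0 : ℝ) < 1 - q ^ 2 := one_sub_pow_pos q hq hq1 2 two_ne_zero
  have hA : (0 : ℝ) < 1 - q ^ (4 * n + 2) := one_sub_pow_pos q hq hq1 _ (by omega)
  have hB : (0 : ℝ) < 1 - q ^ (4 * k + 2) := one_sub_pow_pos q hq hq1 _ (by omega)
  have hC : (0 : ℝ) < 1 - q ^ (4 * (n + k) + 2) := one_sub_pow_pos q hq hq1 _ (by omega)
  have ea : q ^ (4 * n + 2) = q ^ (4 * n) * q ^ 2 := pow_add q _ _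
  have eb : q ^ (4 * k + 2) = q ^ (4 * k) * q ^ 2 := pow_add q _ _
  have ec : q ^ (4 * (n + k) + 2) = q ^ (4 * n) * q ^ (4 * k) * q ^ 2 := by
    rw [show 4 * (n + k) + 2 = 4 * n + (4 * k + 2) by ring, pow_add, pow_add]; ring
  have ha1 : q ^ (4 * n) ≤ 1 := pow_le_one₀ hq.le hq1.le
  have hb1 : q ^ (4 * k) ≤ 1 := pow_le_one₀ hq.le hq1.le
  rw [qnum_ratio q hq hq1 n k]
  constructor
  · rw [le_div_iff₀ (mul_pos h2 hC), one_mul]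
    rw [ea, eb, ec]
    nlinarith [mul_nonneg (mul_nonneg (sq_nonneg q) (sub_nonneg.2 ha1)) (sub_nonneg.2 hb1)]
  · rw [div_le_div_iff₀ (mul_pos h2 hC) (pow_pos h2 2)]
    have hDC : 1 - q ^ 2 ≤ 1 - q ^ (4 * (n + k) + 2) := by
      have : q ^ (4 * (n + k) + 2) ≤ q ^ 2 :=
        pow_le_pow_of_le_one hq.le hq1.le (by omega)
      linarith
    have hAB : (1 - q ^ (4 * n + 2)) * (1 - q ^ (4 * k + 2)) ≤ 1 := by
      nlinarith [pow_pos hq (4 * n + 2), pow_pos hq (4 * k + 2)]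
    nlinarith [mul_le_mul_of_nonneg_right hAB (sq_nonneg (1 - q ^ 2)),
      mul_le_mul_of_nonneg_left hDC h2.le]
/-- Let `0 < q < 1` and set `m_l = [2l+1]_q`.  For all `n + k = l` one has
`1 ≤ m_n·m_k/m_l ≤ 1/(1-q²)²`; consequently, setting
`α_l = (∑_{n+k=l} m_n m_k/m_l)^{-1/2}`, one has
`(1-q²)(l+1)^{-1/2} ≤ α_l ≤ (l+1)^{-1/2}`. -/
theorem stmt8 (q : ℝ) (hq : 0 < q) (hq1 : q < 1) :
    (∀ l n k : ℕ, n + k = l →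
      1 ≤ qnum q (2 * n + 1) * qnum q (2 * k + 1) / qnum q (2 * l + 1) ∧
      qnum q (2 * n + 1) * qnum q (2 * k + 1) / qnum q (2 * l + 1) ≤
        1 / (1 - q ^ 2) ^ 2) ∧
    (∀ l : ℕ,
      (1 - q ^ 2) / Real.sqrt (l + 1) ≤
        (Real.sqrt (∑ n ∈ Finset.range (l + 1),
          qnum q (2 * n + 1) * qnum q (2 * (l - n) + 1) / qnum q (2 * l + 1)))⁻¹ ∧
      (Real.sqrt (∑ n ∈ Finset.range (l + 1),
          qnum q (2 * n + 1) * qnum q (2 * (l - n) + 1) / qnum q (2 * l + 1)))⁻¹ ≤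
        1 / Real.sqrt (l + 1)) := by
  have h2 : (0 : ℝ) < 1 - q ^ 2 := one_sub_pow_pos q hq hq1 2 two_ne_zero
  have part1 : ∀ l n k : ℕ, n + k = l →
      1 ≤ qnum q (2 * n + 1) * qnum q (2 * k + 1) / qnum q (2 * l + 1) ∧
      qnum q (2 * n + 1) * qnum q (2 * k + 1) / qnum q (2 * l + 1) ≤
        1 / (1 - q ^ 2) ^ 2 := by
    intro l n k h; subst h; exact ratio_bounds q hq hq1 n k
  refine ⟨part1, fun l => ?_⟩
  set S := ∑ n ∈ Finset.range (l + 1),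
      qnum q (2 * n + 1) * qnum q (2 * (l - n) + 1) / qnum q (2 * l + 1) with hS
  have hlow : ((l : ℝ) + 1) ≤ S := by
    have := Finset.card_nsmul_le_sum (Finset.range (l + 1))
      (fun n => qnum q (2 * n + 1) * qnum q (2 * (l - n) + 1) / qnum q (2 * l + 1)) 1
      (fun n hn => (part1 l n (l - n) (by simp at hn; omega)).1)
    simpa [hS, mul_comm] using this
  have hhigh : S ≤ ((l : ℝ) + 1) * (1 / (1 - q ^ 2) ^ 2) := by
    have := Finset.sum_le_card_nsmul (Finset.range (l + 1))
      (fun n => qnum q (2 * n + 1) * qnum q (2 * (l - n) + 1) / qnum q (2 * l + 1))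
      (1 / (1 - q ^ 2) ^ 2)
      (fun n hn => (part1 l n (l - n) (by simp at hn; omega)).2)
    simpa [hS, mul_comm] using this
  have hl1 : (0 : ℝ) < (l : ℝ) + 1 := by positivity
  have hSpos : 0 < S := lt_of_lt_of_le hl1 hlow
  have hsl : (0 : ℝ) < Real.sqrt ((l : ℝ) + 1) := Real.sqrt_pos.mpr hl1
  have hsS : (0 : ℝ) < Real.sqrt S := Real.sqrt_pos.mpr hSpos
  constructor
  · have hle : Real.sqrt S ≤ Real.sqrt ((l : ℝ) + 1) / (1 - q ^ 2) := by
      have e : Real.sqrt (((l : ℝ) + 1) * (1 / (1 - q ^ 2) ^ 2)) =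
          Real.sqrt ((l : ℝ) + 1) / (1 - q ^ 2) := by
        rw [Real.sqrt_mul hl1.le, show (1 / (1 - q ^ 2) ^ 2 : ℝ) = (1 / (1 - q ^ 2)) ^ 2 by
          rw [div_pow, one_pow], Real.sqrt_sq (by positivity), mul_one_div]
      calc Real.sqrt S ≤ Real.sqrt (((l : ℝ) + 1) * (1 / (1 - q ^ 2) ^ 2)) :=
            Real.sqrt_le_sqrt hhigh
        _ = _ := e
    have h := inv_anti₀ hsS hle
    rwa [inv_div] at h
  · rw [one_div]
    exact inv_anti₀ hsl (Real.sqrt_le_sqrt hlow)
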